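/- Let 0 < ζ < 1 and consider the 2^L × 2^L Hermitian matrix M = λ·I − H_XYZ, where H_XYZ = −(1/2) Σ_{j=1}^{L−1} (J₁ σ¹_jσ¹_{j+1} + J₂ σ²_jσ²_{j+1} + J₃ σ³_jσ³_{j+1}) + (h_B)₁ + (h_B)_L with J₁ = 1+ζ, J₂ = 1−ζ, J₃ = (ζ²−1)/2, h_B = λ₁σ¹ + λ₃σ³ with λ₁ = −(1+ζ)y/(1+y²) < 0 (for 0 < y < 1) and λ₃ = ((ζ²−1)/4)(1−y²)/(1+y²), and λ ∈ ℝ is chosen larger than all diagonal entries of H_XYZ. Then M has non-negative entries and is irreducible: some power of M has all entries strictly positive. -/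

import Mathlib

open Matrix

noncomputable section

def sigma1 : Matrix (Fin 2) (Fin 2) ℂ := !![0, 1; 1, 0]
def sigma2 : Matrix (Fin 2) (Fin 2) ℂ := !![0, -Complex.I; Complex.I, 0]
def sigma3 : Matrix (Fin 2) (Fin 2) ℂ := !![1, 0; 0, -1]

/-- The single-site operator `A_j` acting on the `j`-th factor of `(ℂ²)^⊗n`. -/
def siteOp (n : ℕ) (A : Matrix (Fin 2) (Fin 2) ℂ) (j : Fin n) :
    Matrix (Fin n → Fin 2) (Fin n → Fin 2) ℂ := fun x y =>
  if ∀ i, i ≠ j → x i = y i then A (x j) (y j) else 0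

/-- The open XYZ Hamiltonian on a chain with `n+1` sites, with `J₁ = 1+ζ`, `J₂ = 1−ζ`,
`J₃ = (ζ²−1)/2` and boundary field `h_B = λ₁σ¹ + λ₃σ³` (real parameter `y`),
`λ₁ = −(1+ζ)y/(1+y²)`, `λ₃ = ((ζ²−1)/4)(1−y²)/(1+y²)`, at the first and last sites. -/
def HXYZ (ζ y : ℝ) (n : ℕ) : Matrix (Fin (n + 1) → Fin 2) (Fin (n + 1) → Fin 2) ℂ :=
  (-(1 / 2 : ℂ)) • (∑ j : Fin n,
      (((1 + ζ : ℝ) : ℂ) • (siteOp (n + 1) sigma1 j.castSucc * siteOp (n + 1) sigma1 j.succ)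
      + ((1 - ζ : ℝ) : ℂ) • (siteOp (n + 1) sigma2 j.castSucc * siteOp (n + 1) sigma2 j.succ)
      + (((ζ ^ 2 - 1) / 2 : ℝ) : ℂ) •
          (siteOp (n + 1) sigma3 j.castSucc * siteOp (n + 1) sigma3 j.succ)))
  + siteOp (n + 1)
      (((-((1 + ζ) * y) / (1 + y ^ 2) : ℝ) : ℂ) • sigma1
        + ((((ζ ^ 2 - 1) / 4) * ((1 - y ^ 2) / (1 + y ^ 2)) : ℝ) : ℂ) • sigma3) 0
  + siteOp (n + 1)
      (((-((1 + ζ) * y) / (1 + y ^ 2) : ℝ) : ℂ) • sigma1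
        + ((((ζ ^ 2 - 1) / 4) * ((1 - y ^ 2) / (1 + y ^ 2)) : ℝ) : ℂ) • sigma3)
      (Fin.last n)

def s1R : Fin 2 → Fin 2 → ℝ := fun a b => if a = b then 0 else 1
def t2R : Fin 2 → Fin 2 → ℝ := fun a b => if a = b then 0 else if a = 0 then -1 else 1
def s3R : Fin 2 → Fin 2 → ℝ := fun a b => if a = b then (if a = 0 then 1 else -1) else 0

def gR (ζ : ℝ) (a b c d : Fin 2) : ℝ :=
  (1 + ζ) * (s1R a b * s1R c d) - (1 - ζ) * (t2R a b * t2R c d)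
    + ((ζ^2 - 1)/2) * (s3R a b * s3R c d)

def hR (ζ y : ℝ) (a b : Fin 2) : ℝ :=
  (-((1 + ζ) * y) / (1 + y ^ 2)) * s1R a b
    + (((ζ ^ 2 - 1) / 4) * ((1 - y ^ 2) / (1 + y ^ 2))) * s3R a b

lemma gC (ζ : ℝ) (a b c d : Fin 2) :
    ((1 + ζ : ℝ) : ℂ) * (sigma1 a b * sigma1 c d)
    + ((1 - ζ : ℝ) : ℂ) * (sigma2 a b * sigma2 c d)
    + (((ζ ^ 2 - 1) / 2 : ℝ) : ℂ) * (sigma3 a b * sigma3 c d)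
    = ((gR ζ a b c d : ℝ) : ℂ) := by
  fin_cases a <;> fin_cases b <;> fin_cases c <;> fin_cases d <;>
    simp [sigma1, sigma2, sigma3, gR, s1R, t2R, s3R] <;> push_cast <;> ring_nf <;>
    simp [Complex.I_sq] <;> push_cast <;> ring

lemma hC (ζ y : ℝ) (a b : Fin 2) :
    ((((-((1 + ζ) * y) / (1 + y ^ 2) : ℝ) : ℂ) • sigma1
        + ((((ζ ^ 2 - 1) / 4) * ((1 - y ^ 2) / (1 + y ^ 2)) : ℝ) : ℂ) • sigma3)) a b
    = ((hR ζ y a b : ℝ) : ℂ) := by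
  fin_cases a <;> fin_cases b <;>
    simp [sigma1, sigma3, hR, s1R, s3R] <;> push_cast <;> ring

lemma twoSite {m : ℕ} (A B : Matrix (Fin 2) (Fin 2) ℂ) (j k : Fin m) (hjk : j ≠ k)
    (x y : Fin m → Fin 2) :
    (siteOp m A j * siteOp m B k) x y =
      if ∀ i, i ≠ j → i ≠ k → x i = y i then A (x j) (y j) * B (x k) (y k) else 0 := by
  rw [Matrix.mul_apply]
  by_cases h : ∀ i, i ≠ j → i ≠ k → x i = y i
  · rw [if_pos h]
    rw [Finset.sum_eq_single (Function.update x j (y j))]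
    · simp only [siteOp]
      rw [if_pos, if_pos]
      · rw [Function.update_self, Function.update_of_ne (Ne.symm hjk)]
      · intro i hi
        rcases eq_or_ne i j with rfl | hij
        · simp
        · rw [Function.update_of_ne hij]; exact h i hij hi
      · intro i hi; rw [Function.update_of_ne hi]
    · intro z _ hz
      simp only [siteOp]
      split_ifs with h1 h2
      · exfalso; apply hz; funext i
        rcases eq_or_ne i j with rfl | hij
        · rw [Function.update_self]; exact h2 i hjk
        · rw [Function.update_of_ne hij]; exact (h1 i hij).symm
      all_goals simp
    · simp
  · rw [if_neg h]
    apply Finset.sum_eq_zero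
    intro z _
    simp only [siteOp]
    split_ifs with h1 h2
    · exfalso; apply h; intro i hij hik
      rw [h1 i hij, h2 i hik]
    all_goals simp

def Fent (ζ y : ℝ) (n : ℕ) (x x' : Fin (n+1) → Fin 2) : ℝ :=
  (-(1/2)) * ∑ j : Fin n,
    (if ∀ i, i ≠ j.castSucc → i ≠ j.succ → x i = x' i
      then gR ζ (x j.castSucc) (x' j.castSucc) (x j.succ) (x' j.succ) else 0)
  + (if ∀ i, i ≠ (0 : Fin (n+1)) → x i = x' i then hR ζ y (x 0) (x' 0) else 0)
  + (if ∀ i, i ≠ Fin.last n → x i = x' i then hR ζ y (x (Fin.last n)) (x' (Fin.last n)) else 0)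

lemma HXYZ_apply (ζ y : ℝ) (n : ℕ) (x x' : Fin (n+1) → Fin 2) :
    HXYZ ζ y n x x' = ((Fent ζ y n x x' : ℝ) : ℂ) := by
  have hpair : ∀ j : Fin n,
      (((1 + ζ : ℝ) : ℂ) • (siteOp (n + 1) sigma1 j.castSucc * siteOp (n + 1) sigma1 j.succ)
      + ((1 - ζ : ℝ) : ℂ) • (siteOp (n + 1) sigma2 j.castSucc * siteOp (n + 1) sigma2 j.succ)
      + (((ζ ^ 2 - 1) / 2 : ℝ) : ℂ) •
          (siteOp (n + 1) sigma3 j.castSucc * siteOp (n + 1) sigma3 j.succ)) x x'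
      = ((if ∀ i, i ≠ j.castSucc → i ≠ j.succ → x i = x' i
          then gR ζ (x j.castSucc) (x' j.castSucc) (x j.succ) (x' j.succ) else 0 : ℝ) : ℂ) := by
    intro j
    have hne : (j.castSucc : Fin (n+1)) ≠ j.succ := (Fin.castSucc_lt_succ : j.castSucc < j.succ).ne
    rw [Matrix.add_apply, Matrix.add_apply, Matrix.smul_apply, Matrix.smul_apply,
      Matrix.smul_apply, twoSite _ _ _ _ hne, twoSite _ _ _ _ hne, twoSite _ _ _ _ hne]
    simp only [smul_eq_mul]
    split_ifs with h
    · exact gC ζ _ _ _ _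
    · simp
  have hb : ∀ s : Fin (n+1),
      siteOp (n+1) (((-((1 + ζ) * y) / (1 + y ^ 2) : ℝ) : ℂ) • sigma1
        + ((((ζ ^ 2 - 1) / 4) * ((1 - y ^ 2) / (1 + y ^ 2)) : ℝ) : ℂ) • sigma3) s x x'
      = ((if ∀ i, i ≠ s → x i = x' i then hR ζ y (x s) (x' s) else 0 : ℝ) : ℂ) := by
    intro s
    show (if ∀ i, i ≠ s → x i = x' i then _ else 0) = _
    split_ifs with h
    · exact hC ζ y _ _
    · simp
  unfold HXYZ Fent
  rw [Matrix.add_apply, Matrix.add_apply, Matrix.smul_apply, Matrix.sum_apply,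
    hb, hb, Finset.sum_congr rfl (fun j _ => hpair j)]
  simp only [smul_eq_mul]
  push_cast
  ring

lemma fin2_add_one_ne (a : Fin 2) : a + 1 ≠ a := by revert a; decide
lemma fin2_ne_eq {a b : Fin 2} (h : a ≠ b) : a + 1 = b := by revert h; revert a b; decide
lemma fin2_aa (a : Fin 2) : a + 1 + 1 = a := by revert a; decide

def flp {m : ℕ} (x : Fin m → Fin 2) (j : Fin m) : Fin m → Fin 2 :=
  Function.update x j (x j + 1)

lemma flp_self {m : ℕ} (x : Fin m → Fin 2) (j : Fin m) : flp x j j = x j + 1 :=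
  Function.update_self j _ x

lemma flp_other {m : ℕ} (x : Fin m → Fin 2) {j i : Fin m} (h : i ≠ j) : flp x j i = x i :=
  Function.update_of_ne h _ x

lemma flp_flp {m : ℕ} (x : Fin m → Fin 2) (j : Fin m) : flp (flp x j) j = x := by
  funext i
  by_cases h : i = j
  · subst h; rw [flp_self, flp_self, fin2_aa]
  · rw [flp_other _ h, flp_other _ h]

lemma flp_ne {m : ℕ} (x : Fin m → Fin 2) (j : Fin m) : flp x j ≠ x := by
  intro h
  have := congrFun h j
  rw [flp_self] at this
  exact fin2_add_one_ne _ this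

lemma gR_nonneg {ζ : ℝ} (hζ0 : 0 < ζ) (hζ1 : ζ < 1) {a b c d : Fin 2}
    (h : ¬(a = b ∧ c = d)) : 0 ≤ gR ζ a b c d := by
  fin_cases a <;> fin_cases b <;> fin_cases c <;> fin_cases d <;>
    simp_all [gR, s1R, t2R, s3R] <;> linarith

lemma gR_pos {ζ : ℝ} (hζ0 : 0 < ζ) (hζ1 : ζ < 1) {a b c d : Fin 2}
    (hab : a ≠ b) (hcd : c ≠ d) : 0 < gR ζ a b c d := by
  fin_cases a <;> fin_cases b <;> fin_cases c <;> fin_cases d <;>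
    simp_all [gR, s1R, t2R, s3R] <;> linarith

lemma hR_neg {ζ y : ℝ} (hζ0 : 0 < ζ) (hy0 : 0 < y) {a b : Fin 2} (hab : a ≠ b) :
    hR ζ y a b < 0 := by
  have key : -((1 + ζ) * y) / (1 + y ^ 2) < 0 :=
    div_neg_of_neg_of_pos (by nlinarith) (by positivity)
  fin_cases a <;> fin_cases b <;> simp_all [hR, s1R, s3R]

def Nmat (ζ y lam : ℝ) (n : ℕ) :
    Matrix (Fin (n+1) → Fin 2) (Fin (n+1) → Fin 2) ℝ :=
  fun x x' => (if x = x' then lam else 0) - Fent ζ y n x x'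

lemma M_eq (ζ y lam : ℝ) (n : ℕ) :
    ((lam : ℂ) • (1 : Matrix (Fin (n + 1) → Fin 2) (Fin (n + 1) → Fin 2) ℂ)
      - HXYZ ζ y n) = (Nmat ζ y lam n).map Complex.ofReal := by
  ext x x'
  rw [Matrix.sub_apply, Matrix.smul_apply, Matrix.map_apply, HXYZ_apply, Matrix.one_apply]
  simp only [Nmat, smul_eq_mul]
  split_ifs <;> push_cast <;> ring

section signs
variable {ζ y lam : ℝ} {n : ℕ}

lemma term_nonneg (hζ0 : 0 < ζ) (hζ1 : ζ < 1) {x x' : Fin (n+1) → Fin 2}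
    (hxx : x ≠ x') (j : Fin n) :
    0 ≤ (if ∀ i, i ≠ j.castSucc → i ≠ j.succ → x i = x' i
      then gR ζ (x j.castSucc) (x' j.castSucc) (x j.succ) (x' j.succ) else 0) := by
  split_ifs with h
  · apply gR_nonneg hζ0 hζ1
    rintro ⟨h1, h2⟩
    apply hxx; funext i
    by_cases hc : i = j.castSucc
    · subst hc; exact h1
    · by_cases hs : i = j.succ
      · subst hs; exact h2
      · exact h i hc hs
  · exact le_refl 0

lemma bterm_nonpos (hζ0 : 0 < ζ) (hy0 : 0 < y) {x x' : Fin (n+1) → Fin 2}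
    (hxx : x ≠ x') (s : Fin (n+1)) :
    (if ∀ i, i ≠ s → x i = x' i then hR ζ y (x s) (x' s) else 0) ≤ 0 := by
  split_ifs with h
  · have hs : x s ≠ x' s := by
      intro he
      apply hxx; funext i
      by_cases hi : i = s
      · subst hi; exact he
      · exact h i hi
    exact (hR_neg hζ0 hy0 hs).le
  · exact le_refl 0

lemma Fent_nonpos (hζ0 : 0 < ζ) (hζ1 : ζ < 1) (hy0 : 0 < y)
    {x x' : Fin (n+1) → Fin 2} (hxx : x ≠ x') : Fent ζ y n x x' ≤ 0 := by
  unfold Fent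
  have hS : 0 ≤ ∑ j : Fin n,
      (if ∀ i, i ≠ j.castSucc → i ≠ j.succ → x i = x' i
        then gR ζ (x j.castSucc) (x' j.castSucc) (x j.succ) (x' j.succ) else 0) :=
    Finset.sum_nonneg fun j _ => term_nonneg hζ0 hζ1 hxx j
  have hb0 := bterm_nonpos (x := x) (x' := x') hζ0 hy0 hxx 0
  have hbl := bterm_nonpos (x := x) (x' := x') hζ0 hy0 hxx (Fin.last n)
  linarith

lemma Nmat_nonneg (hζ0 : 0 < ζ) (hζ1 : ζ < 1) (hy0 : 0 < y)
    (hlam : ∀ x, Fent ζ y n x x < lam) :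
    ∀ x x', 0 ≤ Nmat ζ y lam n x x' := by
  intro x x'
  unfold Nmat
  by_cases h : x = x'
  · subst h; rw [if_pos rfl]; linarith [hlam x]
  · rw [if_neg h]; linarith [Fent_nonpos hζ0 hζ1 hy0 h]

lemma Nmat_diag_pos (hlam : ∀ x, Fent ζ y n x x < lam) (x : Fin (n+1) → Fin 2) :
    0 < Nmat ζ y lam n x x := by
  unfold Nmat; rw [if_pos rfl]; linarith [hlam x]

lemma Nmat_flip0_pos (hζ0 : 0 < ζ) (hζ1 : ζ < 1) (hy0 : 0 < y)
    (x : Fin (n+1) → Fin 2) : 0 < Nmat ζ y lam n x (flp x 0) := by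
  set x' := flp x 0 with hx'
  have hne : x ≠ x' := (flp_ne x 0).symm
  unfold Nmat
  rw [if_neg hne]
  unfold Fent
  have hS : 0 ≤ ∑ j : Fin n,
      (if ∀ i, i ≠ j.castSucc → i ≠ j.succ → x i = x' i
        then gR ζ (x j.castSucc) (x' j.castSucc) (x j.succ) (x' j.succ) else 0) :=
    Finset.sum_nonneg fun j _ => term_nonneg hζ0 hζ1 hne j
  have hbl := bterm_nonpos (x := x) (x' := x') hζ0 hy0 hne (Fin.last n)
  have hcond : ∀ i, i ≠ (0 : Fin (n+1)) → x i = x' i := fun i hi => (flp_other x hi).symm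
  have hd : x 0 ≠ x' 0 := by
    rw [hx', flp_self]; exact (fin2_add_one_ne _).symm
  have hb0 : (if ∀ i, i ≠ (0 : Fin (n+1)) → x i = x' i
      then hR ζ y (x 0) (x' 0) else 0) < 0 := by
    rw [if_pos hcond]; exact hR_neg hζ0 hy0 hd
  linarith

lemma Nmat_pair_pos (hζ0 : 0 < ζ) (hζ1 : ζ < 1) (hy0 : 0 < y)
    (x : Fin (n+1) → Fin 2) (j : Fin n) :
    0 < Nmat ζ y lam n x (flp (flp x j.castSucc) j.succ) := by
  set x' := flp (flp x j.castSucc) j.succ with hx'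
  have hcs : (j.castSucc : Fin (n+1)) ≠ j.succ := (Fin.castSucc_lt_succ : j.castSucc < j.succ).ne
  have hxc : x' j.castSucc = x j.castSucc + 1 := by
    rw [hx', flp_other _ hcs, flp_self]
  have hxs : x' j.succ = x j.succ + 1 := by
    rw [hx', flp_self, flp_other _ hcs.symm]
  have hoth : ∀ i, i ≠ j.castSucc → i ≠ j.succ → x i = x' i := by
    intro i hc hs
    rw [hx', flp_other _ hs, flp_other _ hc]
  have hne : x ≠ x' := by
    intro h
    have := congrFun h j.succ
    rw [hxs] at this
    exact fin2_add_one_ne _ this.symm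
  unfold Nmat
  rw [if_neg hne]
  unfold Fent
  have hterm : ∀ j' : Fin n,
      0 ≤ (if ∀ i, i ≠ j'.castSucc → i ≠ j'.succ → x i = x' i
        then gR ζ (x j'.castSucc) (x' j'.castSucc) (x j'.succ) (x' j'.succ) else 0) :=
    fun j' => term_nonneg hζ0 hζ1 hne j'
  have hj : (if ∀ i, i ≠ j.castSucc → i ≠ j.succ → x i = x' i
      then gR ζ (x j.castSucc) (x' j.castSucc) (x j.succ) (x' j.succ) else 0)
      = gR ζ (x j.castSucc) (x' j.castSucc) (x j.succ) (x' j.succ) := if_pos hoth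
  have hgpos : 0 < gR ζ (x j.castSucc) (x' j.castSucc) (x j.succ) (x' j.succ) := by
    apply gR_pos hζ0 hζ1
    · rw [hxc]; exact (fin2_add_one_ne _).symm
    · rw [hxs]; exact (fin2_add_one_ne _).symm
  have hS : gR ζ (x j.castSucc) (x' j.castSucc) (x j.succ) (x' j.succ)
      ≤ ∑ j' : Fin n,
      (if ∀ i, i ≠ j'.castSucc → i ≠ j'.succ → x i = x' i
        then gR ζ (x j'.castSucc) (x' j'.castSucc) (x j'.succ) (x' j'.succ) else 0) := by
    rw [← hj]
    exact Finset.single_le_sum (fun j' _ => hterm j') (Finset.mem_univ j)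
  have hb0 := bterm_nonpos (x := x) (x' := x') hζ0 hy0 hne 0
  have hbl := bterm_nonpos (x := x) (x' := x') hζ0 hy0 hne (Fin.last n)
  linarith

end signs

section pf
variable {S : Type*} [Fintype S] [DecidableEq S] (P : Matrix S S ℝ)

lemma pow_entry_nonneg (hP : ∀ x x', 0 ≤ P x x') (m : ℕ) :
    ∀ x x', 0 ≤ (P ^ m) x x' := by
  induction m with
  | zero =>
    intro x x'
    rw [pow_zero]
    by_cases h : x = x' <;> simp [Matrix.one_apply, h]
  | succ k ih =>
    intro x x'
    rw [pow_succ, Matrix.mul_apply]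
    exact Finset.sum_nonneg fun z _ => mul_nonneg (ih x z) (hP z x')

lemma reach_trans (hP : ∀ x x', 0 ≤ P x x') {a b : ℕ} {x z x' : S}
    (h1 : 0 < (P ^ a) x z) (h2 : 0 < (P ^ b) z x') :
    0 < (P ^ (a + b)) x x' := by
  rw [pow_add, Matrix.mul_apply]
  exact Finset.sum_pos'
    (fun w _ => mul_nonneg (pow_entry_nonneg P hP a x w) (pow_entry_nonneg P hP b w x'))
    ⟨z, Finset.mem_univ z, mul_pos h1 h2⟩

lemma pad_one (hP : ∀ x x', 0 ≤ P x x') (hdiag : ∀ x, 0 < P x x) {m : ℕ} {x x' : S}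
    (h : 0 < (P ^ m) x x') : 0 < (P ^ (m + 1)) x x' := by
  rw [pow_succ, Matrix.mul_apply]
  exact Finset.sum_pos'
    (fun w _ => mul_nonneg (pow_entry_nonneg P hP m x w) (hP w x'))
    ⟨x', Finset.mem_univ x', mul_pos h (hdiag x')⟩

lemma pad (hP : ∀ x x', 0 ≤ P x x') (hdiag : ∀ x, 0 < P x x) {m m' : ℕ} (hm : m ≤ m')
    {x x' : S} (h : 0 < (P ^ m) x x') : 0 < (P ^ m') x x' := by
  induction m' , hm using Nat.le_induction with
  | base => exact h
  | succ k hk ih => exact pad_one P hP hdiag ih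

end pf

section reach
variable {n : ℕ} (P : Matrix (Fin (n+1) → Fin 2) (Fin (n+1) → Fin 2) ℝ)

lemma reach_flip (hP : ∀ x x', 0 ≤ P x x')
    (h0 : ∀ x, 0 < P x (flp x 0))
    (hpair : ∀ (x) (j : Fin n), 0 < P x (flp (flp x j.castSucc) j.succ)) :
    ∀ (j : Fin (n+1)) (x : Fin (n+1) → Fin 2), ∃ m, 0 < (P ^ m) x (flp x j) := by
  intro j
  induction j using Fin.induction with
  | zero =>
    intro x
    exact ⟨1, by rw [pow_one]; exact h0 x⟩
  | succ i ih =>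
    intro x
    obtain ⟨m, hm⟩ := ih x
    refine ⟨m + 1, reach_trans P hP hm ?_⟩
    rw [pow_one]
    have := hpair (flp x i.castSucc) i
    rwa [flp_flp] at this

lemma reach_all (hP : ∀ x x', 0 ≤ P x x')
    (h0 : ∀ x, 0 < P x (flp x 0))
    (hpair : ∀ (x) (j : Fin n), 0 < P x (flp (flp x j.castSucc) j.succ)) :
    ∀ x x', ∃ m, 0 < (P ^ m) x x' := by
  have key : ∀ (k : ℕ) (x x' : Fin (n+1) → Fin 2),
      (Finset.univ.filter (fun i => x i ≠ x' i)).card = k → ∃ m, 0 < (P ^ m) x x' := by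
    intro k
    induction k using Nat.strong_induction_on with
    | _ k ih =>
      intro x x' hk
      by_cases hxx : x = x'
      · subst hxx
        exact ⟨0, by rw [pow_zero]; simp [Matrix.one_apply]⟩
      · obtain ⟨i, hi⟩ : ∃ i, x i ≠ x' i := Function.ne_iff.mp hxx
        set z := flp x i with hz
        have hzi : z i = x' i := by rw [hz, flp_self]; exact fin2_ne_eq hi
        have hset : (Finset.univ.filter (fun j => z j ≠ x' j))
            = (Finset.univ.filter (fun j => x j ≠ x' j)).erase i := by
          ext j
          simp only [Finset.mem_filter, Finset.mem_erase, Finset.mem_univ, true_and]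
          by_cases hj : j = i
          · subst hj; simp [hzi]
          · rw [hz, flp_other _ hj]; tauto
        have hicard : (Finset.univ.filter (fun j => z j ≠ x' j)).card < k := by
          rw [hset, ← hk]
          exact Finset.card_erase_lt_of_mem (by simp [hi])
        obtain ⟨m2, hm2⟩ := ih _ hicard z x' rfl
        obtain ⟨m1, hm1⟩ := reach_flip P hP h0 hpair i x
        exact ⟨m1 + m2, reach_trans P hP hm1 hm2⟩
  intro x x'
  exact key _ x x' rfl

lemma uniform_pos (hP : ∀ x x', 0 ≤ P x x') (hdiag : ∀ x, 0 < P x x)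
    (hall : ∀ x x', ∃ m, 0 < (P ^ m) x x') :
    ∃ m, ∀ x x', 0 < (P ^ m) x x' := by
  classical
  choose f hf using fun p : (Fin (n+1) → Fin 2) × (Fin (n+1) → Fin 2) => hall p.1 p.2
  refine ⟨Finset.univ.sup f, fun x x' => ?_⟩
  exact pad P hP hdiag (Finset.le_sup (Finset.mem_univ (x, x'))) (hf (x, x'))

end reach

/-- for `0 < ζ < 1`, `0 < y < 1` and `λ` larger than every diagonal entry
of `H_XYZ`, the matrix `M = λ·1 − H_XYZ` has (real) non-negative entries and is
irreducible: some power of `M` has all entries strictly positive. -/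
theorem stmt12 (ζ y : ℝ) (hζ0 : 0 < ζ) (hζ1 : ζ < 1) (hy0 : 0 < y) (hy1 : y < 1)
    (n : ℕ) (lam : ℝ) (hlam : ∀ x, (HXYZ ζ y n x x).re < lam) :
    (∀ x x', (((lam : ℂ) • (1 : Matrix (Fin (n + 1) → Fin 2) (Fin (n + 1) → Fin 2) ℂ)
        - HXYZ ζ y n) x x').im = 0 ∧
      0 ≤ (((lam : ℂ) • (1 : Matrix (Fin (n + 1) → Fin 2) (Fin (n + 1) → Fin 2) ℂ)
        - HXYZ ζ y n) x x').re) ∧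
    ∃ m : ℕ, ∀ x x',
      0 < ((((lam : ℂ) • (1 : Matrix (Fin (n + 1) → Fin 2) (Fin (n + 1) → Fin 2) ℂ)
        - HXYZ ζ y n) ^ m) x x').re := by
  have hlam' : ∀ x, Fent ζ y n x x < lam := by
    intro x
    have := hlam x
    rwa [HXYZ_apply, Complex.ofReal_re] at this
  have hnn := Nmat_nonneg (lam := lam) hζ0 hζ1 hy0 hlam'
  have hdiag := Nmat_diag_pos (lam := lam) hlam'
  have hpow : ∀ m : ℕ,
      ((lam : ℂ) • (1 : Matrix (Fin (n + 1) → Fin 2) (Fin (n + 1) → Fin 2) ℂ)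
        - HXYZ ζ y n) ^ m = ((Nmat ζ y lam n) ^ m).map Complex.ofReal := by
    intro m
    rw [M_eq]
    have h1 : (Nmat ζ y lam n).map Complex.ofReal
        = Complex.ofRealHom.mapMatrix (Nmat ζ y lam n) := rfl
    have h2 : ((Nmat ζ y lam n) ^ m).map Complex.ofReal
        = Complex.ofRealHom.mapMatrix ((Nmat ζ y lam n) ^ m) := rfl
    rw [h1, h2, map_pow]
  constructor
  · intro x x'
    rw [M_eq]
    constructor
    · simp [Matrix.map_apply]
    · simpa [Matrix.map_apply] using hnn x x'
  · obtain ⟨m, hm⟩ := uniform_pos (Nmat ζ y lam n) hnn hdiag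
      (reach_all _ hnn
        (fun x => Nmat_flip0_pos hζ0 hζ1 hy0 x)
        (fun x j => Nmat_pair_pos hζ0 hζ1 hy0 x j))
    refine ⟨m, fun x x' => ?_⟩
    rw [hpow m]
    simpa [Matrix.map_apply] using hm x x'
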